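/- Let Ω ⊆ ℝ^d be open and connected, and let u ∈ USC(Ω) and v ∈ LSC(Ω) be, respectively, a viscosity subsolution and a viscosity supersolution of the Hamilton–Jacobi–Bellman equation inf_α {L^α u − f^α(x)} = 0 in Ω. Assume that for some r̄ > 0 the equation satisfies the Comparison Principle in every ball B(x,r) ⊆ Ω with 0 < r < r̄, and that the homogeneous operator F_i := inf_α L^α is continuous and verifies the Strong Maximum Principle in Ω. If u − v attains a nonnegative maximum in Ω, then u ≡ v + constant in Ω. -/

import Mathlib

open Set Metric Filter Topology

noncomputable section

/-- Euclidean space `ℝ^d`. -/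
abbrev EV (d : ℕ) := EuclideanSpace ℝ (Fin d)

/-- The outer product `p ⊗ p` as a `d × d` matrix. -/
def outer {d : ℕ} (p : EV d) : Matrix (Fin d) (Fin d) ℝ := Matrix.of fun i j => p i * p j

/-- Euclidean dot product. -/
def dotp {d : ℕ} (p q : EV d) : ℝ := ∑ i, p i * q i

/-- Euclidean gradient. -/
def grad {d : ℕ} (φ : EV d → ℝ) (x : EV d) : EV d :=
  (EuclideanSpace.equiv (Fin d) ℝ).symm fun i => fderiv ℝ φ x (EuclideanSpace.single i 1)

/-- Euclidean Hessian matrix. -/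
def hess {d : ℕ} (φ : EV d → ℝ) (x : EV d) : Matrix (Fin d) (Fin d) ℝ :=
  Matrix.of fun i j =>
    fderiv ℝ (fun y => fderiv ℝ φ y (EuclideanSpace.single j 1)) x (EuclideanSpace.single i 1)

/-- `F` is proper: nondecreasing in `r`, nonincreasing in the matrix argument
(w.r.t. the positive semidefinite order `Y ≤ X ↔ (X - Y).PosSemidef`). -/
def IsProper {d m : ℕ} (Ω : Set (EV d))
    (F : EV d → ℝ → EV m → Matrix (Fin m) (Fin m) ℝ → ℝ) : Prop :=
  ∀ x ∈ Ω, ∀ r s : ℝ, ∀ p : EV m, ∀ X Y : Matrix (Fin m) (Fin m) ℝ,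
    r ≤ s → (X - Y).PosSemidef → F x r p X ≤ F x s p Y

/-- Lower semicontinuity of the operator `F`, jointly in all its arguments. -/
def IsLscOperator {d m : ℕ} (Ω : Set (EV d))
    (F : EV d → ℝ → EV m → Matrix (Fin m) (Fin m) ℝ → ℝ) : Prop :=
  LowerSemicontinuousOn
    (fun q : EV d × ℝ × EV m × Matrix (Fin m) (Fin m) ℝ => F q.1 q.2.1 q.2.2.1 q.2.2.2)
    {q | q.1 ∈ Ω ∧ q.2.2.1 ≠ 0 ∧ q.2.2.2.IsSymm}

/-- Condition (ii) (scaling): for some `φ : (0,1] → (0,∞)`,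
`F(x, ξs, ξp, ξX) ≥ φ(ξ) F(x,s,p,X)` for all `ξ ∈ (0,1]`, `s ∈ [-1,0]`. -/
def HasScaling {d m : ℕ} (Ω : Set (EV d))
    (F : EV d → ℝ → EV m → Matrix (Fin m) (Fin m) ℝ → ℝ) : Prop :=
  ∃ φ : ℝ → ℝ, (∀ ξ ∈ Ioc (0:ℝ) 1, 0 < φ ξ) ∧
    ∀ ξ ∈ Ioc (0:ℝ) 1, ∀ s ∈ Icc (-1:ℝ) 0, ∀ x ∈ Ω, ∀ p : EV m, p ≠ 0 →
      ∀ X : Matrix (Fin m) (Fin m) ℝ, X.IsSymm →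
        φ ξ * F x s p X ≤ F x (ξ * s) (ξ • p) (ξ • X)

/-- Ellipticity condition (elli) for a subelliptic operator `G`. -/
def IsElliptic {d m : ℕ} (Ω : Set (EV d))
    (G : EV d → ℝ → EV m → Matrix (Fin m) (Fin m) ℝ → ℝ) : Prop :=
  ∀ x ∈ Ω, ∀ q : EV m, q ≠ 0 → ∀ X : Matrix (Fin m) (Fin m) ℝ, X.IsSymm →
    ∃ γ : ℝ, 0 < γ ∧ 0 < G x 0 q (X - γ • outer q)

/-- `Z` is a generalized subunit vector for `F` at `x`:
`sup_{γ>0} F(x,0,p, I - γ p⊗p) > 0` whenever `Z·p ≠ 0`. -/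
def IsSubunitAt {d : ℕ} (F : EV d → ℝ → EV d → Matrix (Fin d) (Fin d) ℝ → ℝ)
    (x : EV d) (Z : EV d) : Prop :=
  ∀ p : EV d, dotp Z p ≠ 0 → ∃ γ : ℝ, 0 < γ ∧ 0 < F x 0 p (1 - γ • outer p)

/-- Viscosity subsolution (test functions with nonvanishing gradient). -/
def IsViscSubsol {d : ℕ} (Ω : Set (EV d))
    (F : EV d → ℝ → EV d → Matrix (Fin d) (Fin d) ℝ → ℝ) (u : EV d → ℝ) : Prop :=
  ∀ φ : EV d → ℝ, ContDiff ℝ 2 φ → ∀ x ∈ Ω,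
    IsLocalMaxOn (fun y => u y - φ y) Ω x → grad φ x ≠ 0 →
      F x (u x) (grad φ x) (hess φ x) ≤ 0

/-- Viscosity supersolution (test functions with nonvanishing gradient). -/
def IsViscSupersol {d : ℕ} (Ω : Set (EV d))
    (F : EV d → ℝ → EV d → Matrix (Fin d) (Fin d) ℝ → ℝ) (v : EV d → ℝ) : Prop :=
  ∀ φ : EV d → ℝ, ContDiff ℝ 2 φ → ∀ x ∈ Ω,
    IsLocalMinOn (fun y => v y - φ y) Ω x → grad φ x ≠ 0 →
      0 ≤ F x (v x) (grad φ x) (hess φ x)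

/-- Viscosity subsolution (all `C²` test functions). -/
def IsViscSubsolAll {d : ℕ} (Ω : Set (EV d))
    (F : EV d → ℝ → EV d → Matrix (Fin d) (Fin d) ℝ → ℝ) (u : EV d → ℝ) : Prop :=
  ∀ φ : EV d → ℝ, ContDiff ℝ 2 φ → ∀ x ∈ Ω,
    IsLocalMaxOn (fun y => u y - φ y) Ω x →
      F x (u x) (grad φ x) (hess φ x) ≤ 0

/-- Viscosity supersolution (all `C²` test functions). -/
def IsViscSupersolAll {d : ℕ} (Ω : Set (EV d))
    (F : EV d → ℝ → EV d → Matrix (Fin d) (Fin d) ℝ → ℝ) (v : EV d → ℝ) : Prop :=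
  ∀ φ : EV d → ℝ, ContDiff ℝ 2 φ → ∀ x ∈ Ω,
    IsLocalMinOn (fun y => v y - φ y) Ω x →
      0 ≤ F x (v x) (grad φ x) (hess φ x)

/-- Locally Lipschitz on a set. -/
def LocLipschitzOn {α β : Type*} [PseudoMetricSpace α] [PseudoMetricSpace β]
    (f : α → β) (s : Set α) : Prop :=
  ∀ x ∈ s, ∃ K : NNReal, ∃ ε : ℝ, 0 < ε ∧ LipschitzOnWith K f (s ∩ Metric.ball x ε)

/-- Admissible controls: measurable, with `∑ i βᵢ(t)² ≤ 1`. -/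
def Admissible {m : ℕ} (β : ℝ → Fin m → ℝ) : Prop :=
  (∀ i, Measurable fun t => β t i) ∧ ∀ t : ℝ, ∑ i, (β t i) ^ 2 ≤ 1

/-- (Carathéodory) trajectory of the control system `y' = ∑ᵢ βᵢ Zᵢ(y)` on `[0, T]`. -/
def IsTrajOn {d m : ℕ} (Z : Fin m → EV d → EV d) (β : ℝ → Fin m → ℝ)
    (y : ℝ → EV d) (T : ℝ) : Prop :=
  ContinuousOn y (Icc 0 T) ∧
    ∀ t ∈ Icc 0 T, y t = y 0 + ∫ s in (0:ℝ)..t, ∑ i, β s i • Z i (y s)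

/-- `x₁` is reachable from `x₀` by the control system, with trajectory staying in `Ω`. -/
def ReachableIn {d m : ℕ} (Ω : Set (EV d)) (Z : Fin m → EV d → EV d)
    (x₀ x₁ : EV d) : Prop :=
  ∃ (β : ℝ → Fin m → ℝ) (y : ℝ → EV d) (T : ℝ), 0 ≤ T ∧ Admissible β ∧
    IsTrajOn Z β y T ∧ (∀ t ∈ Icc 0 T, y t ∈ Ω) ∧ y 0 = x₀ ∧ y T = x₁

/-- Bounded time controllability in `Ω`. -/
def BTC {d m : ℕ} (Ω : Set (EV d)) (Z : Fin m → EV d → EV d) : Prop :=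
  ∀ x₀ ∈ Ω, ∀ x₁ ∈ Ω, ReachableIn Ω Z x₀ x₁

/-- Generalized exterior (Bony, proximal) normal `ν` to `K` at `z`. -/
def IsExtNormal {d : ℕ} (K : Set (EV d)) (z ν : EV d) : Prop :=
  z ∈ frontier K ∧ ‖ν‖ = 1 ∧
    ∃ t : ℝ, 0 < t ∧ Metric.closedBall (z + t • ν) t ∩ closure K = {z}

/-- Lie bracket of two vector fields. -/
def vfBracket {d : ℕ} (X Y : EV d → EV d) : EV d → EV d :=
  fun x => fderiv ℝ Y x (X x) - fderiv ℝ X x (Y x)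

/-- Vector fields obtained from `Z₁,…,Z_m` by iterated Lie brackets. -/
inductive LieGenerated {d m : ℕ} (Z : Fin m → EV d → EV d) : (EV d → EV d) → Prop
  | base (i : Fin m) : LieGenerated Z (Z i)
  | bracket {X Y : EV d → EV d} :
      LieGenerated Z X → LieGenerated Z Y → LieGenerated Z (vfBracket X Y)

/-- Hörmander condition: the fields and their iterated brackets span `ℝ^d` at every point of `Ω`. -/
def Hormander {d m : ℕ} (Ω : Set (EV d)) (Z : Fin m → EV d → EV d) : Prop :=
  ∀ x ∈ Ω, Submodule.span ℝ {v : EV d | ∃ W, LieGenerated Z W ∧ W x = v} = ⊤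

/-- Intrinsic (horizontal) gradient `σ(x)ᵀ p`. -/
def sigmaT {d m : ℕ} (σ : Fin m → EV d → EV d) (x : EV d) (p : EV d) : EV m :=
  (EuclideanSpace.equiv (Fin m) ℝ).symm fun j => ∑ i, σ j x i * p i

/-- `σ(x)ᵀ X σ(x)` as an `m × m` matrix. -/
def sigmaHess {d m : ℕ} (σ : Fin m → EV d → EV d) (x : EV d)
    (X : Matrix (Fin d) (Fin d) ℝ) : Matrix (Fin m) (Fin m) ℝ :=
  Matrix.of fun j k => ∑ i, ∑ l, σ j x i * X i l * σ k x l

/-- First-order correction term `g(x,p)` of the symmetrized intrinsic Hessian. -/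
def corrTerm {d m : ℕ} (σ : Fin m → EV d → EV d) (x : EV d) (p : EV d) :
    Matrix (Fin m) (Fin m) ℝ :=
  Matrix.of fun j k =>
    ((∑ i, (fderiv ℝ (σ k) x (σ j x)) i * p i) +
      (∑ i, (fderiv ℝ (σ j) x (σ k x)) i * p i)) / 2

/-- Euclidean form `F(x,r,p,X) = G(x, r, σᵀp, σᵀXσ + g(x,p))` of a subelliptic operator. -/
def euclOp {d m : ℕ} (σ : Fin m → EV d → EV d)
    (G : EV d → ℝ → EV m → Matrix (Fin m) (Fin m) ℝ → ℝ) :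
    EV d → ℝ → EV d → Matrix (Fin d) (Fin d) ℝ → ℝ :=
  fun x r p X => G x r (sigmaT σ x p) (sigmaHess σ x X + corrTerm σ x p)

/-- `A ≥ Z ⊗ Z` in the quadratic-form sense: `ξᵀAξ ≥ (Z·ξ)²` for all `ξ`. -/
def matGEouter {d : ℕ} (A : Matrix (Fin d) (Fin d) ℝ) (Z : EV d) : Prop :=
  ∀ ξ : EV d, (dotp Z ξ) ^ 2 ≤ ∑ i, ∑ j, A i j * ξ i * ξ j

/-- The linear degenerate elliptic operator `L^α` evaluated at `(x,r,p,X)`: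
`-Tr(A^α(x) X) - b^α(x)·p + c^α(x) r`. -/
def linOp {d : ℕ} {I : Type*} (A : I → EV d → Matrix (Fin d) (Fin d) ℝ)
    (b : I → EV d → EV d) (c : I → EV d → ℝ) (α : I)
    (x : EV d) (r : ℝ) (p : EV d) (X : Matrix (Fin d) (Fin d) ℝ) : ℝ :=
  -((A α x) * X).trace - dotp (b α x) p + c α x * r

/-- The concave Hamilton–Jacobi–Bellman operator `F_i = inf_α L^α`. -/
def hjbInf {d : ℕ} {I : Type*} (A : I → EV d → Matrix (Fin d) (Fin d) ℝ)
    (b : I → EV d → EV d) (c : I → EV d → ℝ) :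
    EV d → ℝ → EV d → Matrix (Fin d) (Fin d) ℝ → ℝ :=
  fun x r p X => ⨅ α, linOp A b c α x r p X

/-- The convex Hamilton–Jacobi–Bellman operator `F_s = sup_α L^α`. -/
def hjbSup {d : ℕ} {I : Type*} (A : I → EV d → Matrix (Fin d) (Fin d) ℝ)
    (b : I → EV d → EV d) (c : I → EV d → ℝ) :
    EV d → ℝ → EV d → Matrix (Fin d) (Fin d) ℝ → ℝ :=
  fun x r p X => ⨆ α, linOp A b c α x r p X

/-- The inhomogeneous HJB operator `F = inf_α (L^α - f^α)`. -/
def hjbInfF {d : ℕ} {I : Type*} (A : I → EV d → Matrix (Fin d) (Fin d) ℝ)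
    (b : I → EV d → EV d) (c : I → EV d → ℝ) (f : I → EV d → ℝ) :
    EV d → ℝ → EV d → Matrix (Fin d) (Fin d) ℝ → ℝ :=
  fun x r p X => ⨅ α, (linOp A b c α x r p X - f α x)
/-- The (weak) Comparison Principle for the equation `F = 0` in the closed ball `B(x,r)`. -/
def ComparisonOnBall {d : ℕ} (F : EV d → ℝ → EV d → Matrix (Fin d) (Fin d) ℝ → ℝ)
    (x : EV d) (r : ℝ) : Prop :=
  ∀ u v : EV d → ℝ, UpperSemicontinuousOn u (Metric.closedBall x r) →
    LowerSemicontinuousOn v (Metric.closedBall x r) →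
    IsViscSubsolAll (Metric.ball x r) F u → IsViscSupersolAll (Metric.ball x r) F v →
    (∀ z ∈ Metric.sphere x r, u z ≤ v z) → ∀ z ∈ Metric.closedBall x r, u z ≤ v z


/-! ### Auxiliary calculus lemmas -/

lemma grad_apply' {d : ℕ} (φ : EV d → ℝ) (x : EV d) (j : Fin d) :
    grad φ x j = fderiv ℝ φ x (EuclideanSpace.single j 1) := rfl

lemma hess_apply' {d : ℕ} (φ : EV d → ℝ) (x : EV d) (i j : Fin d) :
    hess φ x i j = fderiv ℝ (fun y => fderiv ℝ φ y (EuclideanSpace.single j 1)) x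
      (EuclideanSpace.single i 1) := rfl

lemma dirderiv_contDiff {d : ℕ} {f : EV d → ℝ} (hf : ContDiff ℝ 2 f) (v : EV d) :
    ContDiff ℝ 1 fun y => fderiv ℝ f y v := by
  have h1 : ContDiff ℝ 1 (fderiv ℝ f) := hf.fderiv_right (by norm_num)
  exact (ContinuousLinearMap.apply ℝ ℝ v).contDiff.comp h1

lemma grad_sub' {d : ℕ} {f g : EV d → ℝ} (hf : ContDiff ℝ 2 f) (hg : ContDiff ℝ 2 g) (x : EV d) :
    grad (fun y => f y - g y) x = grad f x - grad g x := by
  ext j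
  have : fderiv ℝ (fun y => f y - g y) x = fderiv ℝ f x - fderiv ℝ g x :=
    fderiv_fun_sub (hf.differentiable (by norm_num) x) (hg.differentiable (by norm_num) x)
  simp [grad_apply', this, PiLp.sub_apply, grad]

lemma hess_sub' {d : ℕ} {f g : EV d → ℝ} (hf : ContDiff ℝ 2 f) (hg : ContDiff ℝ 2 g) (x : EV d) :
    hess (fun y => f y - g y) x = hess f x - hess g x := by
  funext i j
  have hfd : ∀ y, fderiv ℝ (fun z => f z - g z) y (EuclideanSpace.single j 1)
      = fderiv ℝ f y (EuclideanSpace.single j 1) - fderiv ℝ g y (EuclideanSpace.single j 1) := by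
    intro y
    rw [fderiv_fun_sub (hf.differentiable (by norm_num) y) (hg.differentiable (by norm_num) y)]
    rfl
  have h2 : (fun y => fderiv ℝ (fun z => f z - g z) y (EuclideanSpace.single j 1))
      = fun y => fderiv ℝ f y (EuclideanSpace.single j 1)
        - fderiv ℝ g y (EuclideanSpace.single j 1) := funext hfd
  have hdf := (dirderiv_contDiff hf (EuclideanSpace.single j 1)).differentiable one_ne_zero x
  have hdg := (dirderiv_contDiff hg (EuclideanSpace.single j 1)).differentiable one_ne_zero x
  simp only [hess_apply', h2]
  rw [fderiv_fun_sub hdf hdg]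
  simp [hess, Matrix.sub_apply]

/-- The quadratic penalty `y ↦ ∑ (yᵢ - x₀ᵢ)²`. -/
def Qf {d : ℕ} (x₀ : EV d) : EV d → ℝ := fun y => ∑ i, (y i - x₀ i)^2

section Quad
variable {d : ℕ} (x₀ : EV d)

lemma Qf_contDiff : ContDiff ℝ 2 (Qf x₀) := by
  apply ContDiff.sum
  intro i _
  exact ((EuclideanSpace.proj (𝕜 := ℝ) i).contDiff.sub contDiff_const).pow 2

lemma Qf_hasFDerivAt (y : EV d) :
    HasFDerivAt (Qf x₀)
      (∑ i, (2 * (y i - x₀ i)) • (EuclideanSpace.proj (𝕜 := ℝ) i : EV d →L[ℝ] ℝ)) y := by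
  apply HasFDerivAt.fun_sum
  intro i _
  have h1 : HasFDerivAt (fun z : EV d => z i - x₀ i)
      (EuclideanSpace.proj (𝕜 := ℝ) i : EV d →L[ℝ] ℝ) y :=
    ((EuclideanSpace.proj (𝕜 := ℝ) i).hasFDerivAt).sub_const _
  have h2 := h1.fun_mul h1
  have : (2 * (y i - x₀ i)) • (EuclideanSpace.proj (𝕜 := ℝ) i : EV d →L[ℝ] ℝ)
      = (y i - x₀ i) • (EuclideanSpace.proj (𝕜 := ℝ) i : EV d →L[ℝ] ℝ)
        + (y i - x₀ i) • (EuclideanSpace.proj (𝕜 := ℝ) i : EV d →L[ℝ] ℝ) := by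
    rw [two_mul, add_smul]
  rw [this]
  simpa [pow_two] using h2

lemma Qf_fderiv_apply (y : EV d) (j : Fin d) :
    fderiv ℝ (Qf x₀) y (EuclideanSpace.single j 1) = 2 * (y j - x₀ j) := by
  rw [(Qf_hasFDerivAt x₀ y).fderiv]
  simp [ContinuousLinearMap.sum_apply, EuclideanSpace.single_apply,
    Finset.sum_ite_eq, mul_ite]

lemma Qf_eq_dist_sq (y : EV d) : Qf x₀ y = dist y x₀ ^ 2 := by
  rw [EuclideanSpace.dist_eq, Real.sq_sqrt (by positivity)]
  unfold Qf
  congr 1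
  funext i
  rw [Real.dist_eq, sq_abs]

lemma Qf_self : Qf x₀ x₀ = 0 := by simp [Qf]

lemma Qf_continuous : Continuous (Qf x₀) := (Qf_contDiff x₀).continuous

variable {φ : EV d → ℝ}

lemma pert_contDiff (hφ : ContDiff ℝ 2 φ) (t C : ℝ) :
    ContDiff ℝ 2 (fun y => φ y + t * Qf x₀ y + C) :=
  (hφ.add ((Qf_contDiff x₀).const_smul t)).add contDiff_const

lemma pert_hasFDerivAt (hφ : ContDiff ℝ 2 φ) (t C : ℝ) (y : EV d) :
    HasFDerivAt (fun y => φ y + t * Qf x₀ y + C)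
      (fderiv ℝ φ y + t • ∑ i, (2 * (y i - x₀ i)) • (EuclideanSpace.proj (𝕜 := ℝ) i : EV d →L[ℝ] ℝ)) y := by
  exact (((hφ.differentiable (by norm_num) y).hasFDerivAt).add
    ((Qf_hasFDerivAt x₀ y).const_mul t)).add_const C

lemma pert_fderiv_apply (hφ : ContDiff ℝ 2 φ) (t C : ℝ) (y : EV d) (j : Fin d) :
    fderiv ℝ (fun y => φ y + t * Qf x₀ y + C) y (EuclideanSpace.single j 1)
      = fderiv ℝ φ y (EuclideanSpace.single j 1) + t * (2 * (y j - x₀ j)) := by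
  rw [(pert_hasFDerivAt x₀ hφ t C y).fderiv]
  simp [ContinuousLinearMap.sum_apply, EuclideanSpace.single_apply,
    Finset.sum_ite_eq, mul_ite]

lemma pert_grad (hφ : ContDiff ℝ 2 φ) (t C : ℝ) (y : EV d) :
    grad (fun y => φ y + t * Qf x₀ y + C) y = grad φ y + (2*t) • (y - x₀) := by
  ext j
  rw [grad_apply', pert_fderiv_apply x₀ hφ t C y j]
  simp [grad_apply', PiLp.add_apply, PiLp.smul_apply, PiLp.sub_apply]
  ring

lemma pert_hess (hφ : ContDiff ℝ 2 φ) (t C : ℝ) (y : EV d) :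
    hess (fun y => φ y + t * Qf x₀ y + C) y
      = hess φ y + (2*t) • (1 : Matrix (Fin d) (Fin d) ℝ) := by
  funext i j
  rw [hess_apply']
  have h2 : (fun z : EV d => fderiv ℝ (fun y => φ y + t * Qf x₀ y + C) z (EuclideanSpace.single j 1))
      = fun z => fderiv ℝ φ z (EuclideanSpace.single j 1) + t * (2 * (z j - x₀ j)) :=
    funext fun z => pert_fderiv_apply x₀ hφ t C z j
  rw [h2]
  have hlin : HasFDerivAt (fun z : EV d => t * (2 * (z j - x₀ j)))
      ((t * 2) • (EuclideanSpace.proj (𝕜 := ℝ) j : EV d →L[ℝ] ℝ)) y := by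
    have h0 := (((EuclideanSpace.proj (𝕜 := ℝ) j).hasFDerivAt (x := y)).sub_const (x₀ j)).const_mul (t*2)
    have heq : (fun z : EV d => t * (2 * (z j - x₀ j)))
        = fun z : EV d => t * 2 * ((EuclideanSpace.proj (𝕜 := ℝ) j) z - x₀ j) := by
      funext z
      have : (EuclideanSpace.proj (𝕜 := ℝ) j) z = z j := rfl
      rw [this]; ring
    rw [heq]
    exact h0
  have hdφ := (dirderiv_contDiff hφ (EuclideanSpace.single j 1)).differentiable one_ne_zero y
  rw [fderiv_fun_add hdφ hlin.differentiableAt]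
  rw [hlin.fderiv]
  simp [hess_apply', Matrix.add_apply, Matrix.smul_apply, Matrix.one_apply,
    EuclideanSpace.single_apply, eq_comm]
  ring_nf

lemma grad_continuous (hφ : ContDiff ℝ 2 φ) : Continuous (grad φ) := by
  have : Continuous fun y => (fun i => fderiv ℝ φ y (EuclideanSpace.single i 1) : Fin d → ℝ) := by
    apply continuous_pi
    intro i
    exact ((hφ.continuous_fderiv (by norm_num))).clm_apply continuous_const
  exact ((EuclideanSpace.equiv (Fin d) ℝ).symm.continuous).comp this

lemma hess_continuous (hφ : ContDiff ℝ 2 φ) : Continuous (hess φ) := by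
  apply continuous_matrix
  intro i j
  have h1 : ContDiff ℝ 1 fun y => fderiv ℝ φ y (EuclideanSpace.single j 1) :=
    dirderiv_contDiff hφ _
  exact (h1.continuous_fderiv one_ne_zero).clm_apply continuous_const

end Quad

lemma ciInf_add_ciInf_le' {I : Type*} [Nonempty I] (a b : I → ℝ)
    (ha : BddBelow (Set.range a)) (hb : BddBelow (Set.range b)) :
    (⨅ α, a α) + (⨅ α, b α) ≤ ⨅ α, (a α + b α) :=
  le_ciInf fun α => add_le_add (ciInf_le ha α) (ciInf_le hb α)

lemma linOp_add' {d : ℕ} {I : Type*} (A : I → EV d → Matrix (Fin d) (Fin d) ℝ)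
    (b : I → EV d → EV d) (c : I → EV d → ℝ) (α : I) (x : EV d)
    (r r' : ℝ) (p p' : EV d) (X X' : Matrix (Fin d) (Fin d) ℝ) :
    linOp A b c α x (r + r') (p + p') (X + X')
      = linOp A b c α x r p X + linOp A b c α x r' p' X' := by
  simp only [linOp, Matrix.mul_add, Matrix.trace_add, dotp, PiLp.add_apply,
    mul_add, Finset.sum_add_distrib]
  ring

lemma isViscSubsolAll_mono {d : ℕ} {B Ω : Set (EV d)} (hB : IsOpen B) (hBΩ : B ⊆ Ω)
    {F : EV d → ℝ → EV d → Matrix (Fin d) (Fin d) ℝ → ℝ} {u : EV d → ℝ}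
    (h : IsViscSubsolAll Ω F u) : IsViscSubsolAll B F u := by
  intro φ hφ x hx hmax
  apply h φ hφ x (hBΩ hx)
  have h1 : ∀ᶠ z in 𝓝 x, u z - φ z ≤ u x - φ x := by
    rw [← hB.nhdsWithin_eq hx]; exact hmax
  exact h1.filter_mono nhdsWithin_le_nhds

/-- Lemma 4.1: local comparison plus the Strong Maximum Principle for the
homogeneous operator `F_i` yield the Strong Comparison Principle for `inf_α {L^α u - f^α} = 0`. -/
theorem scp_from_local_comparison_and_smp {d : ℕ} (Ω : Set (EV d))
    (hΩ : IsOpen Ω) (hconn : IsConnected Ω) {I : Type*} [Nonempty I]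
    (A : I → EV d → Matrix (Fin d) (Fin d) ℝ) (b : I → EV d → EV d)
    (c : I → EV d → ℝ) (f : I → EV d → ℝ)
    (hpsd : ∀ α x, (A α x).PosSemidef) (hc : ∀ α x, 0 ≤ c α x)
    (hfinF : ∀ (x : EV d) (r : ℝ) (p : EV d) (X : Matrix (Fin d) (Fin d) ℝ),
      BddBelow (Set.range fun α => linOp A b c α x r p X - f α x))
    (hfinFi : ∀ (x : EV d) (r : ℝ) (p : EV d) (X : Matrix (Fin d) (Fin d) ℝ),
      BddBelow (Set.range fun α => linOp A b c α x r p X))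
    (hcontF : ContinuousOn
      (fun q : EV d × ℝ × EV d × Matrix (Fin d) (Fin d) ℝ =>
        hjbInfF A b c f q.1 q.2.1 q.2.2.1 q.2.2.2) {q | q.1 ∈ closure Ω})
    (hcontFi : ContinuousOn
      (fun q : EV d × ℝ × EV d × Matrix (Fin d) (Fin d) ℝ =>
        hjbInf A b c q.1 q.2.1 q.2.2.1 q.2.2.2) {q | q.1 ∈ closure Ω})
    (hCP : ∃ rbar : ℝ, 0 < rbar ∧ ∀ (x : EV d) (r : ℝ), 0 < r → r < rbar →
      Metric.ball x r ⊆ Ω → ComparisonOnBall (hjbInfF A b c f) x r)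
    (hSMP : ∀ w : EV d → ℝ, UpperSemicontinuousOn w Ω →
      IsViscSubsolAll Ω (hjbInf A b c) w →
      ∀ x₀ ∈ Ω, (∀ x ∈ Ω, w x ≤ w x₀) → 0 ≤ w x₀ → ∀ x ∈ Ω, w x = w x₀)
    (u v : EV d → ℝ)
    (husc : UpperSemicontinuousOn u Ω) (hlsc : LowerSemicontinuousOn v Ω)
    (hsub : IsViscSubsolAll Ω (hjbInfF A b c f) u)
    (hsup : IsViscSupersolAll Ω (hjbInfF A b c f) v)
    (x₀ : EV d) (hx₀ : x₀ ∈ Ω)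
    (hmax : ∀ x ∈ Ω, u x - v x ≤ u x₀ - v x₀) (hnn : 0 ≤ u x₀ - v x₀) :
    ∀ x ∈ Ω, u x - v x = u x₀ - v x₀ := by
  classical
  obtain ⟨rbar, hrbarpos, hCPloc⟩ := hCP
  set w : EV d → ℝ := fun x => u x - v x with hwdef
  have huscw : UpperSemicontinuousOn w Ω := by
    have hnegv : UpperSemicontinuousOn (fun x => -v x) Ω :=
      continuous_neg.comp_lowerSemicontinuousOn_antitone hlsc (fun a b hab => neg_le_neg hab)
    have := husc.add hnegv
    simpa [hwdef, sub_eq_add_neg] using this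
  have hsubw : IsViscSubsolAll Ω (hjbInf A b c) w := by
    intro φ hφ xh hxh hmaxφ
    by_contra hpos
    push_neg at hpos
    set C₀ : ℝ := w xh - φ xh with hC₀
    set P₀ : EV d × ℝ × EV d × Matrix (Fin d) (Fin d) ℝ :=
      (xh, w xh, grad φ xh, hess φ xh) with hP₀
    -- continuity of the homogeneous operator at P₀
    have hSnhds : {q : EV d × ℝ × EV d × Matrix (Fin d) (Fin d) ℝ | q.1 ∈ closure Ω} ∈ 𝓝 P₀ := by
      refine Filter.mem_of_superset ?_ (fun q hq => subset_closure hq)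
      exact (continuous_fst.isOpen_preimage Ω hΩ).mem_nhds hxh
    have hca : ContinuousAt (fun q : EV d × ℝ × EV d × Matrix (Fin d) (Fin d) ℝ =>
        hjbInf A b c q.1 q.2.1 q.2.2.1 q.2.2.2) P₀ :=
      (hcontFi P₀ (subset_closure hxh)).continuousAt hSnhds
    have hU : (fun q : EV d × ℝ × EV d × Matrix (Fin d) (Fin d) ℝ =>
        hjbInf A b c q.1 q.2.1 q.2.2.1 q.2.2.2) ⁻¹' (Ioi 0) ∈ 𝓝 P₀ :=
      hca.preimage_mem_nhds (Ioi_mem_nhds hpos)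
    -- the perturbation family
    set Φ : ℝ × EV d → EV d × ℝ × EV d × Matrix (Fin d) (Fin d) ℝ :=
      fun q => (q.2, φ q.2 + q.1 * Qf xh q.2 + (C₀ - q.1^3),
        grad φ q.2 + (2*q.1) • (q.2 - xh),
        hess φ q.2 + (2*q.1) • (1 : Matrix (Fin d) (Fin d) ℝ)) with hΦdef
    have hΦc : Continuous Φ := by
      refine continuous_snd.prodMk (Continuous.prodMk ?_ (Continuous.prodMk ?_ ?_))
      · exact ((hφ.continuous.comp continuous_snd).add
          (continuous_fst.mul ((Qf_continuous xh).comp continuous_snd))).add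
          (continuous_const.sub (continuous_fst.pow 3))
      · exact ((grad_continuous hφ).comp continuous_snd).add
          ((continuous_const.mul continuous_fst).smul (continuous_snd.sub continuous_const))
      · exact ((hess_continuous hφ).comp continuous_snd).add
          ((continuous_const.mul continuous_fst).smul continuous_const)
    have hΦ0 : Φ ((0:ℝ), xh) = P₀ := by
      simp only [hΦdef, hP₀, hC₀]
      norm_num
    have hnb : Φ ⁻¹' ((fun q : EV d × ℝ × EV d × Matrix (Fin d) (Fin d) ℝ =>
        hjbInf A b c q.1 q.2.1 q.2.2.1 q.2.2.2) ⁻¹' (Ioi 0)) ∈ 𝓝 ((0:ℝ), xh) := by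
      apply hΦc.continuousAt.preimage_mem_nhds
      rw [hΦ0]
      exact hU
    obtain ⟨ε, hεpos, hεsub⟩ := Metric.mem_nhds_iff.1 hnb
    -- the local max region
    have hnx : 𝓝[Ω] xh = 𝓝 xh := hΩ.nhdsWithin_eq hxh
    have hev : {y : EV d | w y - φ y ≤ C₀} ∈ 𝓝 xh := by
      rw [← hnx]
      exact hmaxφ
    have hev2 : Ω ∩ {y : EV d | w y - φ y ≤ C₀} ∈ 𝓝 xh :=
      Filter.inter_mem (hΩ.mem_nhds hxh) hev
    obtain ⟨ε₂, hε₂pos, hε₂sub⟩ := Metric.mem_nhds_iff.1 hev2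
    -- choice of the radius
    set ρ : ℝ := min (min (ε/2) (ε₂/2)) (rbar/2) with hρdef
    have hρpos : 0 < ρ := by positivity
    have hρε : ρ < ε := lt_of_le_of_lt ((min_le_left _ _).trans (min_le_left _ _)) (by linarith)
    have hρε₂ : ρ < ε₂ := lt_of_le_of_lt ((min_le_left _ _).trans (min_le_right _ _)) (by linarith)
    have hρrbar : ρ < rbar := lt_of_le_of_lt (min_le_right _ _) (by linarith)
    have hcbsub : Metric.closedBall xh ρ ⊆ Ω ∩ {y : EV d | w y - φ y ≤ C₀} :=
      fun z hz => hε₂sub (closedBall_subset_ball hρε₂ hz)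
    have hcbΩ : Metric.closedBall xh ρ ⊆ Ω := fun z hz => (hcbsub hz).1
    have hcbT : ∀ z ∈ Metric.closedBall xh ρ, w z - φ z ≤ C₀ := fun z hz => (hcbsub hz).2
    -- the perturbed test function and the supersolution
    set h : EV d → ℝ := fun y => φ y + ρ * Qf xh y + (C₀ - ρ^3) with hhdef
    have hhC2 : ContDiff ℝ 2 h := pert_contDiff xh hφ ρ _
    have hgradh : ∀ y, grad h y = grad φ y + (2*ρ) • (y - xh) := pert_grad xh hφ ρ _
    have hhessh : ∀ y, hess h y = hess φ y + (2*ρ) • (1 : Matrix (Fin d) (Fin d) ℝ) :=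
      pert_hess xh hφ ρ _
    have hFi_pos : ∀ y ∈ Metric.closedBall xh ρ,
        0 < hjbInf A b c y (h y) (grad h y) (hess h y) := by
      intro y hy
      have hmem : ((ρ : ℝ), y) ∈ Metric.ball ((0:ℝ), xh) ε := by
        rw [Metric.mem_ball, Prod.dist_eq]
        rw [Metric.mem_closedBall] at hy
        have h1 : dist ρ (0:ℝ) = ρ := by
          rw [Real.dist_eq, sub_zero, abs_of_pos hρpos]
        rw [h1]
        exact sup_lt_iff.2 ⟨hρε, lt_of_le_of_lt hy hρε⟩
      have h2 := hεsub hmem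
      simp only [Set.mem_preimage, Set.mem_Ioi, hΦdef] at h2
      rw [hhdef, hgradh, hhessh]
      exact h2
    set ψ : EV d → ℝ := fun y => v y + h y with hψdef
    have hψsup : IsViscSupersolAll (Metric.ball xh ρ) (hjbInfF A b c f) ψ := by
      intro θ hθ y hyB hminθ
      have hyΩ : y ∈ Ω := hcbΩ (Metric.ball_subset_closedBall hyB)
      have hθh : ContDiff ℝ 2 (fun z => θ z - h z) := hθ.sub hhC2
      have hminΩ : IsLocalMinOn (fun z => v z - (θ z - h z)) Ω y := by
        have e1 : ∀ z, v z - (θ z - h z) = ψ z - θ z := fun z => by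
          simp only [hψdef]; ring
        have h1 : ∀ᶠ z in 𝓝 y, ψ y - θ y ≤ ψ z - θ z := by
          rw [← Metric.isOpen_ball.nhdsWithin_eq hyB]
          exact hminθ
        have h2 : ∀ᶠ z in 𝓝[Ω] y, ψ y - θ y ≤ ψ z - θ z :=
          h1.filter_mono nhdsWithin_le_nhds
        exact h2.mono fun z hz => by
          show v y - (θ y - h y) ≤ v z - (θ z - h z)
          rw [e1, e1]; exact hz
      have h0 := hsup (fun z => θ z - h z) hθh y hyΩ hminΩ
      have hgr : grad (fun z => θ z - h z) y = grad θ y - grad h y := grad_sub' hθ hhC2 y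
      have hhe : hess (fun z => θ z - h z) y = hess θ y - hess h y := hess_sub' hθ hhC2 y
      rw [hgr, hhe] at h0
      have key : ∀ α : I, linOp A b c α y (ψ y) (grad θ y) (hess θ y) - f α y
          = (linOp A b c α y (v y) (grad θ y - grad h y) (hess θ y - hess h y) - f α y)
            + linOp A b c α y (h y) (grad h y) (hess h y) := by
        intro α
        have hadd := linOp_add' A b c α y (v y) (h y) (grad θ y - grad h y) (grad h y)
          (hess θ y - hess h y) (hess h y)
        rw [sub_add_cancel, sub_add_cancel] at hadd
        have hψy : ψ y = v y + h y := rfl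
        rw [hψy, hadd]
        ring
      have hfiy := hFi_pos y (Metric.ball_subset_closedBall hyB)
      have hchain : (0:ℝ) ≤ (⨅ α, (linOp A b c α y (v y) (grad θ y - grad h y)
            (hess θ y - hess h y) - f α y))
          + (⨅ α, linOp A b c α y (h y) (grad h y) (hess h y)) := by
        exact add_nonneg h0 (le_of_lt hfiy)
      have hsum := ciInf_add_ciInf_le'
        (fun α => linOp A b c α y (v y) (grad θ y - grad h y) (hess θ y - hess h y) - f α y)
        (fun α => linOp A b c α y (h y) (grad h y) (hess h y))
        (hfinF y (v y) (grad θ y - grad h y) (hess θ y - hess h y))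
        (hfinFi y (h y) (grad h y) (hess h y))
      have hre : (fun α : I => (linOp A b c α y (v y) (grad θ y - grad h y)
            (hess θ y - hess h y) - f α y)
          + linOp A b c α y (h y) (grad h y) (hess h y))
          = fun α : I => linOp A b c α y (ψ y) (grad θ y) (hess θ y) - f α y := by
        funext α
        rw [key α]
      rw [hre] at hsum
      exact le_trans hchain hsum
    -- boundary comparison
    have hbd : ∀ z ∈ Metric.sphere xh ρ, u z ≤ ψ z := by
      intro z hz
      have hzcb : z ∈ Metric.closedBall xh ρ := Metric.sphere_subset_closedBall hz
      have h1 : w z - φ z ≤ C₀ := hcbT z hzcb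
      have hQz : Qf xh z = ρ^2 := by
        rw [Qf_eq_dist_sq]
        rw [Metric.mem_sphere] at hz
        rw [hz]
      have hψz : ψ z = v z + φ z + ρ * ρ^2 + (C₀ - ρ^3) := by
        simp only [hψdef, hhdef, hQz]
        ring
      have hwz : w z = u z - v z := rfl
      rw [hψz]
      rw [hwz] at h1
      nlinarith [h1]
    have hψlsc : LowerSemicontinuousOn ψ (Metric.closedBall xh ρ) := by
      have h1 : LowerSemicontinuousOn v (Metric.closedBall xh ρ) := hlsc.mono hcbΩ
      have h2 : LowerSemicontinuousOn h (Metric.closedBall xh ρ) :=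
        (hhC2.continuous.lowerSemicontinuous).lowerSemicontinuousOn _
      exact h1.add h2
    have husub : IsViscSubsolAll (Metric.ball xh ρ) (hjbInfF A b c f) u :=
      isViscSubsolAll_mono Metric.isOpen_ball
        (fun z hz => hcbΩ (Metric.ball_subset_closedBall hz)) hsub
    have hcmp := hCPloc xh ρ hρpos hρrbar
      (fun z hz => hcbΩ (Metric.ball_subset_closedBall hz)) u ψ
      (husc.mono hcbΩ) hψlsc husub hψsup hbd xh (Metric.mem_closedBall_self hρpos.le)
    have hψxh : ψ xh = u xh - ρ^3 := by
      simp only [hψdef, hhdef, Qf_self, hC₀, hwdef]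
      ring
    rw [hψxh] at hcmp
    linarith [pow_pos hρpos 3]
  exact hSMP w huscw hsubw x₀ hx₀ hmax hnn
end
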